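/- Let X be a compact Hausdorff space, V ⊆ X an open subset, p ≥ 1, and s : X → ℝ^p a continuous map whose restriction to V is an open map (the image under s of every open subset of V is open in ℝ^p). Assume there is m < ∞ such that #(s⁻¹({x}) ∩ V) ≤ m for every x ∈ ℝ^p. Then there exists a subset Y of the open set s(V), open and dense in s(V), such that every point of s⁻¹(Y) ∩ V has an open neighborhood N ⊆ V on which s restricts to a homeomorphism of N onto an open subset of ℝ^p. -/

import Mathlib

/-- Pairwise disjoint open neighborhoods of the points of a finite set in a T2 space. -/
lemma aux_pairwise_disjoint_nbhds {X : Type*} [TopologicalSpace X] [T2Space X] {F : Set X}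
    (hF : F.Finite) :
    ∃ N : X → Set X, (∀ a ∈ F, IsOpen (N a) ∧ a ∈ N a) ∧
      ∀ a ∈ F, ∀ b ∈ F, a ≠ b → Disjoint (N a) (N b) := by
  classical
  have hsep : ∀ a b : X, ∃ u : Set X × Set X, a ≠ b →
      IsOpen u.1 ∧ IsOpen u.2 ∧ a ∈ u.1 ∧ b ∈ u.2 ∧ Disjoint u.1 u.2 := by
    intro a b
    by_cases h : a ≠ b
    · obtain ⟨u, v, hu, hv, hau, hbv, hd⟩ := t2_separation h
      exact ⟨(u, v), fun _ => ⟨hu, hv, hau, hbv, hd⟩⟩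
    · exact ⟨(Set.univ, Set.univ), fun h' => absurd h' h⟩
  choose U hU using hsep
  set N : X → Set X := fun a => ⋂ b ∈ F \ {a}, ((U a b).1 ∩ (U b a).2) with hN
  refine ⟨N, ?_, ?_⟩
  · intro a ha
    constructor
    · refine (hF.diff (t := {a})).isOpen_biInter fun b hb => ?_
      have hab : a ≠ b := fun h => hb.2 h.symm
      exact ((hU a b hab).1).inter ((hU b a hab.symm).2.1)
    · refine Set.mem_biInter fun b hb => ?_
      have hab : a ≠ b := fun h => hb.2 h.symm
      exact ⟨(hU a b hab).2.2.1, (hU b a hab.symm).2.2.2.1⟩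
  · intro a ha b hb hab
    have h1 : N a ⊆ (U a b).1 := by
      intro x hx
      exact (Set.mem_iInter₂.1 hx b ⟨hb, fun h => hab h.symm⟩).1
    have h2 : N b ⊆ (U a b).2 := by
      intro x hx
      exact (Set.mem_iInter₂.1 hx a ⟨ha, fun h => hab h⟩).2
    exact Set.disjoint_of_subset h1 h2 (hU a b hab).2.2.2.2

/-- Let `X` be compact Hausdorff, `V ⊆ X` open, and `s : X → ℝ^p` continuous whose restriction
to `V` is an open map.  If the number of preimages in `V` of any point is uniformly bounded by
some `m`, then there is an open dense subset `Y` of `s(V)` such that every point of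
`s⁻¹(Y) ∩ V` has an open neighborhood `N ⊆ V` on which `s` restricts to a homeomorphism onto
an open subset of `ℝ^p`. -/
theorem local_homeo_on_dense_subset {X : Type*} [TopologicalSpace X] [CompactSpace X]
    [T2Space X] (p : ℕ) (hp : 1 ≤ p) (V : Set X) (hV : IsOpen V)
    (s : X → (Fin p → ℝ)) (hs_cont : Continuous s)
    (hs_open : ∀ U : Set X, U ⊆ V → IsOpen U → IsOpen (s '' U))
    (m : ℕ) (hm : ∀ x : Fin p → ℝ, (s ⁻¹' {x} ∩ V).encard ≤ m) :
    ∃ Y : Set (Fin p → ℝ), Y ⊆ s '' V ∧ IsOpen Y ∧ s '' V ⊆ closure Y ∧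
      ∀ χ ∈ s ⁻¹' Y ∩ V, ∃ N : Set X, IsOpen N ∧ χ ∈ N ∧ N ⊆ V ∧ IsOpen (s '' N) ∧
        ∃ e : N ≃ₜ (s '' N), ∀ x : N, (e x : Fin p → ℝ) = s x := by
  classical
  -- fibers (in V) are finite with at most m elements
  have hfin : ∀ y : Fin p → ℝ, (s ⁻¹' {y} ∩ V).Finite := fun y =>
    (Set.encard_le_coe_iff_finite_ncard_le.1 (hm y)).1
  have hncard : ∀ y : Fin p → ℝ, (s ⁻¹' {y} ∩ V).ncard ≤ m := fun y =>
    (Set.encard_le_coe_iff_finite_ncard_le.1 (hm y)).2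
  set n : (Fin p → ℝ) → ℕ := fun y => (s ⁻¹' {y} ∩ V).ncard with hn
  -- basic neighborhood structure around a point of s '' V
  have nbhd : ∀ y : Fin p → ℝ, y ∈ s '' V → ∃ (N : X → Set X) (W : Set (Fin p → ℝ)),
      (∀ a ∈ s ⁻¹' {y} ∩ V, IsOpen (N a) ∧ a ∈ N a ∧ N a ⊆ V) ∧
      (∀ a ∈ s ⁻¹' {y} ∩ V, ∀ b ∈ s ⁻¹' {y} ∩ V, a ≠ b → Disjoint (N a) (N b)) ∧
      IsOpen W ∧ y ∈ W ∧ (∀ a ∈ s ⁻¹' {y} ∩ V, W ⊆ s '' (N a)) := by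
    intro y hy
    obtain ⟨N₀, hN₀, hdisj₀⟩ := aux_pairwise_disjoint_nbhds (hfin y)
    set F := s ⁻¹' {y} ∩ V with hF
    set N : X → Set X := fun a => N₀ a ∩ V with hNdef
    have hNprop : ∀ a ∈ F, IsOpen (N a) ∧ a ∈ N a ∧ N a ⊆ V := by
      intro a ha
      exact ⟨(hN₀ a ha).1.inter hV, ⟨(hN₀ a ha).2, ha.2⟩, Set.inter_subset_right⟩
    have hdisj : ∀ a ∈ F, ∀ b ∈ F, a ≠ b → Disjoint (N a) (N b) := by
      intro a ha b hb hab
      exact Set.disjoint_of_subset Set.inter_subset_left Set.inter_subset_left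
        (hdisj₀ a ha b hb hab)
    refine ⟨N, ⋂ a ∈ F, s '' (N a), hNprop, hdisj, ?_, ?_, ?_⟩
    · exact (hfin y).isOpen_biInter fun a ha =>
        hs_open (N a) (hNprop a ha).2.2 (hNprop a ha).1
    · refine Set.mem_biInter fun a ha => ?_
      exact ⟨a, (hNprop a ha).2.1, ha.1⟩
    · intro a ha
      exact Set.biInter_subset_of_mem ha
  -- from a point y' in all the s '' (N a) get an injection of fibers
  have inj_step : ∀ (y y' : Fin p → ℝ) (N : X → Set X),
      (∀ a ∈ s ⁻¹' {y} ∩ V, IsOpen (N a) ∧ a ∈ N a ∧ N a ⊆ V) →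
      (∀ a ∈ s ⁻¹' {y} ∩ V, ∀ b ∈ s ⁻¹' {y} ∩ V, a ≠ b → Disjoint (N a) (N b)) →
      (∀ a ∈ s ⁻¹' {y} ∩ V, y' ∈ s '' (N a)) →
      ∃ g : X → X, Set.InjOn g (s ⁻¹' {y} ∩ V) ∧
        (∀ a ∈ s ⁻¹' {y} ∩ V, g a ∈ N a ∧ g a ∈ s ⁻¹' {y'} ∩ V) := by
    intro y y' N hNprop hdisj hy'
    have hex : ∀ a : X, ∃ x : X, a ∈ s ⁻¹' {y} ∩ V → x ∈ N a ∧ s x = y' := by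
      intro a
      by_cases ha : a ∈ s ⁻¹' {y} ∩ V
      · obtain ⟨x, hx, hxy⟩ := hy' a ha
        exact ⟨x, fun _ => ⟨hx, hxy⟩⟩
      · exact ⟨a, fun h => absurd h ha⟩
    choose g hg using hex
    refine ⟨g, ?_, ?_⟩
    · intro a ha b hb hab
      by_contra hne
      have h1 : g a ∈ N a := (hg a ha).1
      have h2 : g a ∈ N b := hab ▸ (hg b hb).1
      exact (Set.disjoint_left.1 (hdisj a ha b hb hne)) h1 h2
    · intro a ha
      exact ⟨(hg a ha).1, (hg a ha).2, (hNprop a ha).2.2 (hg a ha).1⟩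
  -- lower semicontinuity of the fiber count
  have lsc : ∀ y ∈ s '' V, ∃ W : Set (Fin p → ℝ),
      IsOpen W ∧ y ∈ W ∧ W ⊆ s '' V ∧ ∀ y' ∈ W, n y ≤ n y' := by
    intro y hy
    obtain ⟨N, W, hNprop, hdisj, hWo, hyW, hWsub⟩ := nbhd y hy
    obtain ⟨x₀, hx₀V, hx₀y⟩ := hy
    have hx₀F : x₀ ∈ s ⁻¹' {y} ∩ V := ⟨hx₀y, hx₀V⟩
    have hWssV : W ⊆ s '' V := fun y' hy' => by
      obtain ⟨x, hx, hxy⟩ := hWsub x₀ hx₀F hy'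
      exact ⟨x, (hNprop x₀ hx₀F).2.2 hx, hxy⟩
    refine ⟨W, hWo, hyW, hWssV, ?_⟩
    intro y' hy'
    obtain ⟨g, hginj, hg⟩ := inj_step y y' N hNprop hdisj (fun a ha => hWsub a ha hy')
    calc n y = (g '' (s ⁻¹' {y} ∩ V)).ncard := (Set.ncard_image_of_injOn hginj).symm
      _ ≤ n y' := Set.ncard_le_ncard
          (fun z ⟨a, ha, hz⟩ => hz ▸ (hg a ha).2) (hfin y')
  -- the set Y : points where n is locally constant
  set Y : Set (Fin p → ℝ) :=
    {y | ∃ W : Set (Fin p → ℝ), IsOpen W ∧ y ∈ W ∧ W ⊆ s '' V ∧ ∀ y' ∈ W, n y' = n y}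
    with hY
  have hYsub : Y ⊆ s '' V := fun y ⟨W, _, hyW, hWs, _⟩ => hWs hyW
  have hYopen : IsOpen Y := by
    rw [isOpen_iff_forall_mem_open]
    rintro y ⟨W, hWo, hyW, hWs, hWc⟩
    refine ⟨W, fun y' hy' => ⟨W, hWo, hy', hWs, fun y'' hy'' => ?_⟩, hWo, hyW⟩
    rw [hWc y'' hy'', hWc y' hy']
  have hYdense : s '' V ⊆ closure Y := by
    intro y₀ hy₀
    rw [mem_closure_iff]
    intro o ho hy₀o
    -- maximize n on o ∩ s '' V
    set S := o ∩ s '' V with hS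
    have hSne : S.Nonempty := ⟨y₀, hy₀o, hy₀⟩
    have hSimne : (n '' S).Nonempty := hSne.image n
    have hSbdd : BddAbove (n '' S) := ⟨m, fun k ⟨y, _, hk⟩ => hk ▸ hncard y⟩
    obtain ⟨y, hyS, hymax⟩ : ∃ y ∈ S, n y = sSup (n '' S) := by
      obtain ⟨y, hyS, h⟩ := Nat.sSup_mem hSimne hSbdd
      exact ⟨y, hyS, h⟩
    obtain ⟨W, hWo, hyW, hWs, hWlsc⟩ := lsc y hyS.2
    refine ⟨y, ⟨hyS.1, ?_⟩⟩
    refine ⟨W ∩ o, hWo.inter ho, ⟨hyW, hyS.1⟩, fun z hz => hWs hz.1, ?_⟩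
    intro y' hy'
    have h1 : n y ≤ n y' := hWlsc y' hy'.1
    have h2 : n y' ≤ n y := by
      rw [hymax]
      exact le_csSup hSbdd ⟨y', ⟨hy'.2, hWs hy'.1⟩, rfl⟩
    omega
  refine ⟨Y, hYsub, hYopen, hYdense, ?_⟩
  rintro χ ⟨hχY, hχV⟩
  obtain ⟨Wc, hWco, hyWc, hWcs, hWcc⟩ := hχY
  set y := s χ with hy
  have hysv : y ∈ s '' V := ⟨χ, hχV, rfl⟩
  have hχF : χ ∈ s ⁻¹' {y} ∩ V := ⟨rfl, hχV⟩
  obtain ⟨N, W, hNprop, hdisj, hWo, hyW, hWsub⟩ := nbhd y hysv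
  set W₀ := W ∩ Wc with hW₀
  set Nfin : Set X := N χ ∩ s ⁻¹' W₀ with hNfin
  have hNfino : IsOpen Nfin := ((hNprop χ hχF).1).inter ((hWo.inter hWco).preimage hs_cont)
  have hχNfin : χ ∈ Nfin := ⟨(hNprop χ hχF).2.1, hyW, hyWc⟩
  have hNfinV : Nfin ⊆ V := fun x hx => (hNprop χ hχF).2.2 hx.1
  -- injectivity of s on Nfin
  have hinj : Set.InjOn s Nfin := by
    intro a ha b hb hab
    set y' := s a with hy'
    have hy'W₀ : y' ∈ W₀ := ha.2
    obtain ⟨g, hginj, hg⟩ := inj_step y y' N hNprop hdisj (fun c hc => hWsub c hc hy'W₀.1)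
    have himsub : g '' (s ⁻¹' {y} ∩ V) ⊆ s ⁻¹' {y'} ∩ V := by
      rintro z ⟨c, hc, rfl⟩; exact (hg c hc).2
    have hncard_eq : n y' = n y := hWcc y' hy'W₀.2
    have him_eq : g '' (s ⁻¹' {y} ∩ V) = s ⁻¹' {y'} ∩ V := by
      apply Set.eq_of_subset_of_ncard_le himsub ?_ (hfin y')
      have heq : (g '' (s ⁻¹' {y} ∩ V)).ncard = n y := Set.ncard_image_of_injOn hginj
      have heq2 : (s ⁻¹' {y'} ∩ V).ncard = n y' := rfl
      omega
    -- every point of the fiber of y' is some g c; a and b are in N χ, so both equal g χ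
    have key : ∀ x ∈ Nfin, s x = y' → x = g χ := by
      intro x hx hxy
      have hxF' : x ∈ s ⁻¹' {y'} ∩ V := ⟨hxy, hNfinV hx⟩
      rw [← him_eq] at hxF'
      obtain ⟨c, hc, hcx⟩ := hxF'
      by_cases hcχ : c = χ
      · rw [← hcx, hcχ]
      · exfalso
        have h1 : x ∈ N c := hcx ▸ (hg c hc).1
        exact (Set.disjoint_left.1 (hdisj c hc χ hχF hcχ)) h1 hx.1
    rw [key a ha rfl, key b hb hab.symm]
  have hsNopen : IsOpen (s '' Nfin) := hs_open Nfin hNfinV hNfino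
  -- build the homeomorphism
  set f : Nfin → (s '' Nfin : Set (Fin p → ℝ)) :=
    fun x => ⟨s x.1, ⟨x.1, x.2, rfl⟩⟩ with hf
  have hfbij : Function.Bijective f := by
    constructor
    · intro a b hab
      exact Subtype.ext (hinj a.2 b.2 (congrArg Subtype.val hab))
    · rintro ⟨z, x, hx, rfl⟩
      exact ⟨⟨x, hx⟩, rfl⟩
  have hfcont : Continuous f := (hs_cont.comp continuous_subtype_val).subtype_mk _
  have hfopen : IsOpenMap f := by
    intro U hU
    obtain ⟨O, hO, rfl⟩ := isOpen_induced_iff.1 hU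
    have himg : f '' (Subtype.val ⁻¹' O) =
        Subtype.val ⁻¹' (s '' (O ∩ Nfin)) := by
      ext ⟨z, hz⟩
      simp only [Set.mem_image, Set.mem_preimage, Subtype.ext_iff]
      constructor
      · rintro ⟨⟨x, hx⟩, hxO, hfx⟩
        exact ⟨x, ⟨hxO, hx⟩, hfx⟩
      · rintro ⟨x, ⟨hxO, hx⟩, hxz⟩
        exact ⟨⟨x, hx⟩, hxO, hxz⟩
    rw [himg]
    exact (hs_open (O ∩ Nfin) (fun x hx => hNfinV hx.2) (hO.inter hNfino)).preimage
      continuous_subtype_val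
  refine ⟨Nfin, hNfino, hχNfin, hNfinV, hsNopen,
    Equiv.toHomeomorphOfContinuousOpen (Equiv.ofBijective f hfbij) hfcont hfopen,
    fun x => rfl⟩
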